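/- Fix $n \ge 2$ and consider the system of equations in complex variables $z_1, \dots, z_{n-1}$: $z_k^2 = \tfrac{1}{2} z_k (z_{k-1} + z_{k+1})$ for $k = 1, \dots, n-1$, where by convention $z_0 = z_n = 0$. Then the only solution in $\mathbb{C}^{n-1}$ is $z_1 = z_2 = \cdots = z_{n-1} = 0$. -/

import Mathlib

/-- If `a + b = 2c` and `|a|, |b| ≤ |c|`, then `a = c`. -/
lemma midpoint_eq_aux (a b c : ℂ) (h : a + b = 2 * c)
    (ha : ‖a‖ ≤ ‖c‖) (hb : ‖b‖ ≤ ‖c‖) :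
    a = c := by
  have h1 : Complex.normSq a ≤ Complex.normSq c := by
    rw [Complex.normSq_eq_norm_sq, Complex.normSq_eq_norm_sq, sq, sq]
    exact mul_self_le_mul_self (norm_nonneg a) ha
  have hb' : b = 2 * c - a := by linear_combination h
  have h2 : Complex.normSq (2 * c - a) ≤ Complex.normSq c := by
    rw [← hb']
    rw [Complex.normSq_eq_norm_sq, Complex.normSq_eq_norm_sq, sq, sq]
    exact mul_self_le_mul_self (norm_nonneg b) hb
  simp only [Complex.normSq_apply, Complex.sub_re, Complex.sub_im, Complex.mul_re,
    Complex.mul_im, Complex.re_ofNat, Complex.im_ofNat] at h1 h2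
  apply Complex.ext <;> nlinarith [sq_nonneg (a.re - c.re), sq_nonneg (a.im - c.im)]

theorem peterson_system_only_trivial_solution (n : ℕ) (hn : 2 ≤ n)
    (z : ℕ → ℂ) (hz0 : z 0 = 0) (hzn : z n = 0)
    (hsys : ∀ k : ℕ, 1 ≤ k → k ≤ n - 1 →
      z k ^ 2 = (1/2 : ℂ) * z k * (z (k - 1) + z (k + 1))) :
    ∀ k : ℕ, 1 ≤ k → k ≤ n - 1 → z k = 0 := by
  have hne : (Finset.Icc 1 (n-1)).Nonempty := ⟨1, by simp; omega⟩
  obtain ⟨m, hm, hmax⟩ :=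
    Finset.exists_max_image (Finset.Icc 1 (n-1)) (fun j => ‖z j‖) hne
  simp only [Finset.mem_Icc] at hm
  have hmax' : ∀ j, j ≤ n → ‖z j‖ ≤ ‖z m‖ := by
    intro j hj
    rcases Nat.eq_zero_or_pos j with h0 | h1
    · subst h0; simp [hz0]
    · rcases eq_or_lt_of_le hj with hn' | hn'
      · subst hn'; simp [hzn]
      · exact hmax j (Finset.mem_Icc.mpr ⟨h1, by omega⟩)
  intro k hk1 hk2
  by_contra hk
  have hzm : z m ≠ 0 := by
    intro h
    apply hk
    have h1 := hmax' k (by omega)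
    rw [h] at h1
    simp only [norm_zero] at h1
    exact norm_eq_zero.mp (le_antisymm h1 (norm_nonneg _))
  -- propagate to the left: z (m - j) = z m for all j ≤ m
  have key : ∀ j, j ≤ m → z (m - j) = z m := by
    intro j
    induction j with
    | zero => intro _; rfl
    | succ j ih =>
      intro hj
      have hjm : j ≤ m := by omega
      have IH := ih hjm
      set i := m - j with hi
      have hi1 : 1 ≤ i := by omega
      have hi2 : i ≤ n - 1 := by omega
      have hzi : z i ≠ 0 := by rw [IH]; exact hzm
      have heq := hsys i hi1 hi2
      have hsum : z (i - 1) + z (i + 1) = 2 * z i := by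
        have h2 : z i * (z (i - 1) + z (i + 1) - 2 * z i) = 0 := by
          linear_combination -2 * heq
        rcases mul_eq_zero.mp h2 with h | h
        · exact absurd h hzi
        · linear_combination h
      have habs : ‖z i‖ = ‖z m‖ := by rw [IH]
      have h1 : ‖z (i - 1)‖ ≤ ‖z i‖ := by
        rw [habs]; exact hmax' (i - 1) (by omega)
      have h2 : ‖z (i + 1)‖ ≤ ‖z i‖ := by
        rw [habs]; exact hmax' (i + 1) (by omega)
      have := midpoint_eq_aux (z (i - 1)) (z (i + 1)) (z i) hsum h1 h2
      have hidx : m - (j + 1) = i - 1 := by omega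
      rw [hidx, this, IH]
  have h0 := key m le_rfl
  rw [Nat.sub_self] at h0
  rw [hz0] at h0
  exact hzm h0.symm
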